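/- Let l ≥ 1. Suppose f_1,…,f_l : ℂ^l → ℂ and F : ℂ^l → ℂ is real-differentiable satisfying (H3), and suppose (H4) holds with positive constants σ_1,…,σ_l. Then the nonlinearities satisfy the gauge condition: for every θ ∈ ℝ, every z ∈ ℂ^l and every k ∈ {1,…,l}, f_k(e^{iσ_1θ/2} z_1, …, e^{iσ_lθ/2} z_l) = e^{iσ_kθ/2} f_k(z_1,…,z_l). -/

import Mathlib

open Complex Finset

noncomputable def wD {l : ℕ} (f : (Fin l → ℂ) → ℂ) (z : Fin l → ℂ) (m : Fin l) : ℂ :=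
  (1 / 2 : ℂ) *
    ((fderiv ℝ f z) (Pi.single m 1) - Complex.I * (fderiv ℝ f z) (Pi.single m Complex.I))

noncomputable def wDbar {l : ℕ} (f : (Fin l → ℂ) → ℂ) (z : Fin l → ℂ) (m : Fin l) : ℂ :=
  (1 / 2 : ℂ) *
    ((fderiv ℝ f z) (Pi.single m 1) + Complex.I * (fderiv ℝ f z) (Pi.single m Complex.I))

lemma single_decomp {l : ℕ} (k : Fin l) (v : ℂ) :
    (Pi.single k v : Fin l → ℂ) = v.re • (Pi.single k (1:ℂ) : Fin l → ℂ) + v.im • (Pi.single k Complex.I : Fin l → ℂ) := by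
  rw [← Pi.single_smul, ← Pi.single_smul, ← Pi.single_add]
  rw [Complex.real_smul, Complex.real_smul, mul_one]
  exact congrArg _ (Complex.re_add_im v).symm

lemma fderiv_single_eq {l : ℕ} (F : (Fin l → ℂ) → ℂ) (z : Fin l → ℂ) (k : Fin l) (v : ℂ) :
    fderiv ℝ F z (Pi.single k v) = wD F z k * v + wDbar F z k * starRingEnd ℂ v := by
  rw [single_decomp, map_add, map_smul, map_smul, wD, wDbar]
  set P := fderiv ℝ F z (Pi.single k 1)
  set Q := fderiv ℝ F z (Pi.single k Complex.I)
  have h1 : (v:ℂ) = (v.re:ℂ) + v.im * Complex.I := (Complex.re_add_im v).symm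
  have h2 : starRingEnd ℂ v = (v.re:ℂ) - v.im * Complex.I := by
    rw [Complex.ext_iff]; simp
  rw [h2, Complex.real_smul, Complex.real_smul]
  linear_combination (-(1/2:ℂ)*(P - Complex.I*Q)) * h1 + (v.im:ℂ)*Q * Complex.I_mul_I

noncomputable def scaleCLM {l : ℕ} (c : Fin l → ℂ) : (Fin l → ℂ) →L[ℝ] (Fin l → ℂ) :=
  ContinuousLinearMap.pi fun m => c m • ContinuousLinearMap.proj m

lemma scaleCLM_apply {l : ℕ} (c : Fin l → ℂ) (v : Fin l → ℂ) :
    scaleCLM c v = fun m => c m * v m := by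
  funext m
  simp [scaleCLM, smul_eq_mul]

lemma scaleCLM_single {l : ℕ} (c : Fin l → ℂ) (k : Fin l) (v : ℂ) :
    scaleCLM c (Pi.single k v) = Pi.single k (c k * v) := by
  rw [scaleCLM_apply]
  funext m
  rcases eq_or_ne m k with h | h
  · subst h; simp
  · simp [Pi.single_apply, h]

lemma wDbar_scale {l : ℕ} (G : (Fin l → ℂ) → ℂ) (hG : Differentiable ℝ G)
    (c : Fin l → ℂ) (z : Fin l → ℂ) (k : Fin l) :
    wDbar (fun z => G (fun m => c m * z m)) z k
      = starRingEnd ℂ (c k) * wDbar G (fun m => c m * z m) k := by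
  have hcomp : (fun z => G (fun m => c m * z m)) = G ∘ (scaleCLM c) := by
    funext w; simp [scaleCLM_apply]
  have hfd : fderiv ℝ (G ∘ (scaleCLM c)) z
      = (fderiv ℝ G (scaleCLM c z)).comp (scaleCLM c) :=
    ((hG (scaleCLM c z)).hasFDerivAt.comp z (scaleCLM c).hasFDerivAt).fderiv
  have hz : scaleCLM c z = fun m => c m * z m := scaleCLM_apply c z
  rw [wDbar, hcomp, hfd]
  simp only [ContinuousLinearMap.coe_comp', Function.comp_apply, scaleCLM_single, hz]
  rw [fderiv_single_eq, fderiv_single_eq]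
  set P := wD G (fun m => c m * z m) k
  set Q := wDbar G (fun m => c m * z m) k
  simp only [map_mul, Complex.conj_I, mul_one, map_one]
  linear_combination ((1/2:ℂ)*(P * c k - Q * starRingEnd ℂ (c k))) * Complex.I_mul_I

-- conj lemma
lemma fderiv_conj_apply {l : ℕ} (F : (Fin l → ℂ) → ℂ) (hF : Differentiable ℝ F)
    (z : Fin l → ℂ) (u : Fin l → ℂ) :
    fderiv ℝ (fun z => starRingEnd ℂ (F z)) z u = starRingEnd ℂ (fderiv ℝ F z u) := by
  have h := fderiv_star (𝕜 := ℝ) (f := F) (x := z)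
  simp only [Complex.star_def] at h
  rw [h]
  simp [Complex.star_def]

lemma wDbar_conj {l : ℕ} (F : (Fin l → ℂ) → ℂ) (hF : Differentiable ℝ F) (z : Fin l → ℂ) (k : Fin l) :
    wDbar (fun z => starRingEnd ℂ (F z)) z k = starRingEnd ℂ (wD F z k) := by
  rw [wDbar, wD, fderiv_conj_apply F hF, fderiv_conj_apply F hF]
  simp [map_mul, map_sub, map_div₀, map_one, map_ofNat, Complex.conj_I]

lemma wD_conj {l : ℕ} (F : (Fin l → ℂ) → ℂ) (hF : Differentiable ℝ F) (z : Fin l → ℂ) (k : Fin l) :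
    wD (fun z => starRingEnd ℂ (F z)) z k = starRingEnd ℂ (wDbar F z k) := by
  rw [wDbar, wD, fderiv_conj_apply F hF, fderiv_conj_apply F hF]
  simp [map_mul, map_add, map_div₀, map_one, map_ofNat, Complex.conj_I]
  ring

lemma wDbar_add {l : ℕ} (F H : (Fin l → ℂ) → ℂ) (hF : Differentiable ℝ F) (hH : Differentiable ℝ H)
    (z : Fin l → ℂ) (k : Fin l) :
    wDbar (fun z => F z + H z) z k = wDbar F z k + wDbar H z k := by
  rw [wDbar, wDbar, wDbar, fderiv_fun_add (hF z) (hH z)]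
  simp
  ring

lemma wD_add {l : ℕ} (F H : (Fin l → ℂ) → ℂ) (hF : Differentiable ℝ F) (hH : Differentiable ℝ H)
    (z : Fin l → ℂ) (k : Fin l) :
    wD (fun z => F z + H z) z k = wD F z k + wD H z k := by
  rw [wD, wD, wD, fderiv_fun_add (hF z) (hH z)]
  simp
  ring

theorem statement11 (l : ℕ) (hl : 1 ≤ l)
    (f : Fin l → (Fin l → ℂ) → ℂ)
    (F : (Fin l → ℂ) → ℂ) (hF : Differentiable ℝ F)
    (hH3 : ∀ (z : Fin l → ℂ) (k : Fin l),
      f k z = wDbar F z k + starRingEnd ℂ (wD F z k))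
    (σ : Fin l → ℝ) (hσ : ∀ k, 0 < σ k)
    (hH4 : ∀ z : Fin l → ℂ,
      (∑ k, (σ k : ℂ) * (f k z * starRingEnd ℂ (z k))).im = 0) :
    ∀ (θ : ℝ) (z : Fin l → ℂ) (k : Fin l),
      f k (fun m => Complex.exp (Complex.I * ((σ m * θ / 2 : ℝ) : ℂ)) * z m) =
        Complex.exp (Complex.I * ((σ k * θ / 2 : ℝ) : ℂ)) * f k z := by
  intro θ z k
  -- G = F + conj F
  set G : (Fin l → ℂ) → ℂ := fun w => F w + starRingEnd ℂ (F w) with hGdef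
  have hFc : Differentiable ℝ (fun w => starRingEnd ℂ (F w)) := by
    simpa [Complex.star_def] using hF.star
  have hG : Differentiable ℝ G := hF.add hFc
  -- wDbar G = f, wD G = conj f
  have key1 : ∀ (w : Fin l → ℂ) (k : Fin l), wDbar G w k = f k w := by
    intro w k
    rw [hGdef, wDbar_add F _ hF hFc, wDbar_conj F hF, hH3]
  have key2 : ∀ (w : Fin l → ℂ) (k : Fin l), wD G w k = starRingEnd ℂ (f k w) := by
    intro w k
    rw [hGdef, wD_add F _ hF hFc, wD_conj F hF, hH3, map_add, Complex.conj_conj, add_comm]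
  -- the gauge flow
  set c : ℝ → Fin l → ℂ := fun θ m => Complex.exp (Complex.I * ((σ m * θ / 2 : ℝ) : ℂ)) with hcdef
  -- constancy of G along the flow
  have hconst : ∀ (θ : ℝ) (z : Fin l → ℂ), G (fun m => c θ m * z m) = G z := by
    intro θ z
    set w : ℝ → Fin l → ℂ := fun θ m => c θ m * z m with hwdef
    have hw : ∀ θ, HasDerivAt w (fun m => c θ m * (Complex.I * ((σ m / 2 : ℝ) : ℂ)) * z m) θ := by
      intro θ
      apply hasDerivAt_pi.mpr
      intro m
      have h0 : HasDerivAt (fun θ : ℝ => σ m * θ / 2) (σ m / 2) θ := by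
        simpa using ((hasDerivAt_id θ).const_mul (σ m)).div_const 2
      exact ((h0.ofReal_comp.const_mul Complex.I).cexp).mul_const (z m)
    have hderiv0 : ∀ θ, HasDerivAt (fun θ => G (w θ)) 0 θ := by
      intro θ
      have hg := HasFDerivAt.comp_hasDerivAt θ (hG (w θ)).hasFDerivAt (hw θ)
      have hzero : fderiv ℝ G (w θ) (fun m => c θ m * (Complex.I * ((σ m / 2 : ℝ) : ℂ)) * z m) = 0 := by
        have hexp : (fun m => c θ m * (Complex.I * ((σ m / 2 : ℝ) : ℂ)) * z m)
            = ∑ j, Pi.single j (c θ j * (Complex.I * ((σ j / 2 : ℝ) : ℂ)) * z j) :=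
          (Finset.univ_sum_single _).symm
        rw [hexp, map_sum]
        have hS := hH4 (w θ)
        have hSc : starRingEnd ℂ (∑ j, (σ j : ℂ) * (f j (w θ) * starRingEnd ℂ (w θ j)))
            = ∑ j, (σ j : ℂ) * (f j (w θ) * starRingEnd ℂ (w θ j)) :=
          Complex.conj_eq_iff_im.mpr hS
        have hkey : (∑ j, fderiv ℝ G (w θ) (Pi.single j (c θ j * (Complex.I * ((σ j / 2 : ℝ) : ℂ)) * z j)))
            = (Complex.I / 2) * ((starRingEnd ℂ (∑ j, (σ j : ℂ) * (f j (w θ) * starRingEnd ℂ (w θ j))))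
                - ∑ j, (σ j : ℂ) * (f j (w θ) * starRingEnd ℂ (w θ j))) := by
          rw [map_sum, ← Finset.sum_sub_distrib, Finset.mul_sum]
          apply Finset.sum_congr rfl
          intro j _
          rw [fderiv_single_eq, key1, key2]
          have hwj : w θ j = c θ j * z j := rfl
          rw [hwj]
          simp only [map_mul, Complex.conj_I, Complex.conj_conj, Complex.conj_ofReal, map_div₀, map_ofNat]
          push_cast
          ring
        rw [hkey, hSc, sub_self, mul_zero]
      rw [hzero] at hg
      exact hg
    have hgconst : G (w θ) = G (w 0) :=
      is_const_of_deriv_eq_zero (fun θ => (hderiv0 θ).differentiableAt)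
        (fun θ => (hderiv0 θ).deriv) θ 0
    have hw0 : w 0 = z := by
      funext m
      simp [hwdef, hcdef]
    rw [hw0] at hgconst
    exact hgconst
  -- now differentiate the constancy in z
  have hfun : (fun w => G (fun m => c θ m * w m)) = G := by
    funext w
    exact hconst θ w
  have hchain := wDbar_scale G hG (c θ) z k
  rw [hfun] at hchain
  -- hchain : wDbar G z k = conj (c θ k) * wDbar G (fun m => c θ m * z m) k
  rw [key1, key1] at hchain
  have hcc : c θ k * starRingEnd ℂ (c θ k) = 1 := by
    rw [hcdef]
    simp only [← Complex.exp_conj, map_mul, Complex.conj_I, Complex.conj_ofReal]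
    rw [← Complex.exp_add]
    simp
  calc f k (fun m => c θ m * z m)
      = (c θ k * starRingEnd ℂ (c θ k)) * f k (fun m => c θ m * z m) := by rw [hcc, one_mul]
    _ = c θ k * (starRingEnd ℂ (c θ k) * f k (fun m => c θ m * z m)) := by ring
    _ = c θ k * f k z := by rw [← hchain]
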